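/- Let p ≥ 1 with |U| ≥ p, let f be a normalized, non-negative, monotone submodular set function on U, let λ ≥ 0, and let G_0 = ∅, G_{i+1} = G_i ∪ {u_{i+1}} for 0 ≤ i < p, where each u_{i+1} ∈ U∖G_i maximizes (1/2)(f(G_i∪{u}) − f(G_i)) + λ·Σ_{v∈G_i} d(u,v) over u ∈ U∖G_i. Then for every subset O ⊆ U with |O| = p, f(G_p) + λ·d(G_p) ≥ (1/2)·(f(O) + λ·d(O)). (The greedy algorithm is a 2-approximation for max-sum diversification with a cardinality constraint.) -/

import Mathlib

open Finset

/-- `dispSet d S` is the sum of `d u v` over all unordered pairs `{u,v}` of distinct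
elements of `S` (for a symmetric `d` with `d u u = 0`, half the double sum). -/
noncomputable def dispSet {U : Type*} (d : U → U → ℝ) (S : Finset U) : ℝ :=
  (∑ u ∈ S, ∑ v ∈ S, d u v) / 2

set_option linter.unusedSectionVars false
set_option linter.unusedVariables false
set_option maxHeartbeats 1000000

section AuxLemmas
variable {U : Type*} [DecidableEq U]

lemma marg_sum (f : Finset U → ℝ)
    (hfsub : ∀ (S T : Finset U) (u : U), S ⊆ T →
      f (insert u T) - f T ≤ f (insert u S) - f S)
    (S : Finset U) : ∀ (A : Finset U), f (S ∪ A) - f S ≤ ∑ v ∈ A, (f (insert v S) - f S) := by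
  intro A
  induction A using Finset.induction_on with
  | empty => simp
  | @insert w A hw ih =>
    rw [Finset.sum_insert hw, Finset.union_insert]
    have h1 := hfsub S (S ∪ A) w Finset.subset_union_left
    linarith

lemma tri_sum (d : U → U → ℝ) (hsymm : ∀ u v, d u v = d v u)
    (hrefl : ∀ u, d u u = 0)
    (htri : ∀ u v w, d u w ≤ d u v + d v w)
    (X : Finset U) (y : U) :
    ∑ x ∈ X, ∑ x' ∈ X, d x x' ≤ 2*((X.card:ℝ) - 1) * ∑ x ∈ X, d x y := by
  have key : ∀ x ∈ X, (∑ x' ∈ X, d x x') + 2 * d x y ≤ ∑ x' ∈ X, (d x y + d x' y) := by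
    intro x hx
    have h1 : 2 * d x y ≤ ∑ x' ∈ X, (d x y + d x' y - d x x') := by
      have h2 : ∀ x' ∈ X, (0:ℝ) ≤ d x y + d x' y - d x x' := by
        intro x' _
        have h3 := htri x y x'
        rw [hsymm y x'] at h3
        linarith
      have h4 := Finset.single_le_sum h2 hx
      rw [hrefl] at h4
      linarith
    rw [Finset.sum_sub_distrib] at h1
    linarith
  have h2 := Finset.sum_le_sum key
  have h7 : ∑ i ∈ X, ∑ x' ∈ X, (d i y + d x' y) = 2 * (X.card:ℝ) * ∑ x ∈ X, d x y := by
    have hh : ∀ i ∈ X, ∑ x' ∈ X, (d i y + d x' y) = (X.card:ℝ) * d i y + ∑ x' ∈ X, d x' y := by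
      intro i _
      simp [Finset.sum_add_distrib, Finset.sum_const, nsmul_eq_mul]
    rw [Finset.sum_congr rfl hh, Finset.sum_add_distrib, Finset.sum_const, ← Finset.mul_sum,
      nsmul_eq_mul]
    ring
  rw [h7, Finset.sum_add_distrib] at h2
  have h8 : ∑ x ∈ X, 2 * d x y = 2 * ∑ x ∈ X, d x y := by rw [Finset.mul_sum]
  rw [h8] at h2
  nlinarith [h2]

lemma tri_sum2 (d : U → U → ℝ) (hsymm : ∀ u v, d u v = d v u)
    (hrefl : ∀ u, d u u = 0)
    (htri : ∀ u v w, d u w ≤ d u v + d v w)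
    (X Y : Finset U) :
    (Y.card:ℝ) * (∑ x ∈ X, ∑ x' ∈ X, d x x') ≤
      2*((X.card:ℝ) - 1) * ∑ x ∈ X, ∑ y ∈ Y, d x y := by
  calc (Y.card:ℝ) * (∑ x ∈ X, ∑ x' ∈ X, d x x')
      = ∑ _y ∈ Y, (∑ x ∈ X, ∑ x' ∈ X, d x x') := by
        rw [Finset.sum_const, nsmul_eq_mul]
    _ ≤ ∑ y ∈ Y, 2*((X.card:ℝ) - 1) * ∑ x ∈ X, d x y :=
        Finset.sum_le_sum (fun y _ => tri_sum d hsymm hrefl htri X y)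
    _ = 2*((X.card:ℝ) - 1) * ∑ y ∈ Y, ∑ x ∈ X, d x y := by rw [← Finset.mul_sum]
    _ = 2*((X.card:ℝ) - 1) * ∑ x ∈ X, ∑ y ∈ Y, d x y := by rw [Finset.sum_comm]

lemma main_claim (d : U → U → ℝ) (hsymm : ∀ u v, d u v = d v u)
    (hnonneg : ∀ u v, 0 ≤ d u v)
    (hrefl : ∀ u, d u u = 0)
    (htri : ∀ u v w, d u w ≤ d u v + d v w)
    (O G : Finset U) (p i : ℕ)
    (hOc : O.card = p) (hGc : G.card = i) (hip : i < p) :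
    ((O \ G).card : ℝ) * (i:ℝ) * ((∑ x ∈ O, ∑ y ∈ O, d x y) / 2) ≤
      (p:ℝ) * ((p:ℝ) - 1) * ∑ v ∈ O \ G, ∑ x ∈ G, d v x := by
  classical
  set A := O \ G with hA
  set B := O ∩ G with hB
  -- cardinalities
  have habp : A.card + B.card = p := by
    rw [hA, hB, Finset.card_sdiff_add_card_inter, hOc]
  have hbi : B.card ≤ i := by
    rw [hB, ← hGc]; exact Finset.card_le_card Finset.inter_subset_right
  have hGOc : (G \ O).card + B.card = i := by
    rw [hB, Finset.inter_comm, ← hGc]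
    exact Finset.card_sdiff_add_card_inter G O
  have ha1 : 1 ≤ A.card := by omega
  -- real abbreviations
  set t := ∑ x ∈ A, ∑ y ∈ A, d x y with ht
  set TB := ∑ x ∈ B, ∑ y ∈ B, d x y with hTB
  set c := ∑ x ∈ A, ∑ y ∈ B, d x y with hc
  set e := ∑ x ∈ A, ∑ y ∈ G \ O, d x y with he
  have ht0 : 0 ≤ t := Finset.sum_nonneg fun x _ => Finset.sum_nonneg fun y _ => hnonneg x y
  have hTB0 : 0 ≤ TB := Finset.sum_nonneg fun x _ => Finset.sum_nonneg fun y _ => hnonneg x y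
  have hc0 : 0 ≤ c := Finset.sum_nonneg fun x _ => Finset.sum_nonneg fun y _ => hnonneg x y
  have he0 : 0 ≤ e := Finset.sum_nonneg fun x _ => Finset.sum_nonneg fun y _ => hnonneg x y
  -- C(A,G) = c + e
  have hsplitG : ∀ v : U, ∑ x ∈ G, d v x = ∑ x ∈ B, d v x + ∑ x ∈ G \ O, d v x := by
    intro v
    rw [hB, Finset.inter_comm]
    exact (Finset.sum_inter_add_sum_sdiff G O (fun x => d v x)).symm
  have hCE : ∑ v ∈ A, ∑ x ∈ G, d v x = c + e := by
    rw [hc, he, ← Finset.sum_add_distrib]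
    exact Finset.sum_congr rfl fun v _ => hsplitG v
  -- C(B,A) = c
  have hBA : ∑ x ∈ B, ∑ y ∈ A, d x y = c := by
    rw [hc, Finset.sum_comm]
    exact Finset.sum_congr rfl fun x _ => Finset.sum_congr rfl fun y _ => hsymm _ _
  -- T(O) = t + 2c + TB
  have hsplitO : ∀ g : U → ℝ, ∑ x ∈ O, g x = ∑ x ∈ B, g x + ∑ x ∈ A, g x := by
    intro g
    rw [hA, hB]
    exact (Finset.sum_inter_add_sum_sdiff O G g).symm
  have hTO : ∑ x ∈ O, ∑ y ∈ O, d x y = t + 2*c + TB := by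
    rw [hsplitO (fun x => ∑ y ∈ O, d x y)]
    have e1 : ∀ x : U, ∑ y ∈ O, d x y = ∑ y ∈ B, d x y + ∑ y ∈ A, d x y :=
      fun x => hsplitO (fun y => d x y)
    rw [Finset.sum_congr rfl (fun x _ => e1 x), Finset.sum_congr (rfl : A = A) (fun x _ => e1 x),
      Finset.sum_add_distrib, Finset.sum_add_distrib, hBA]
    ring_nf
    linarith
  -- the three triangle inequalities
  have h2 : (B.card:ℝ) * t ≤ 2*((A.card:ℝ) - 1) * c :=
    tri_sum2 d hsymm hrefl htri A B
  have h3 : ((G \ O).card:ℝ) * t ≤ 2*((A.card:ℝ) - 1) * e :=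
    tri_sum2 d hsymm hrefl htri A (G \ O)
  have h4 : (A.card:ℝ) * TB ≤ 2*((B.card:ℝ) - 1) * c := by
    have := tri_sum2 d hsymm hrefl htri B A
    rwa [hBA] at this
  -- pass to reals
  set α := (A.card:ℝ) with hα
  set β := (B.card:ℝ) with hβ
  set π := (p:ℝ) with hπ
  set ι := (i:ℝ) with hι
  have hαβ : α + β = π := by rw [hα, hβ, hπ, ← habp]; push_cast; ring
  have hβι : β ≤ ι := by rw [hβ, hι]; exact_mod_cast hbi
  have hιπ : ι + 1 ≤ π := by rw [hι, hπ]; exact_mod_cast hip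
  have hα1 : 1 ≤ α := by rw [hα]; exact_mod_cast ha1
  have hβ0 : 0 ≤ β := by rw [hβ]; positivity
  have hι0 : 0 ≤ ι := by rw [hι]; positivity
  have hGOr : ((G \ O).card : ℝ) = ι - β := by
    rw [hι, hβ]
    have : (G \ O).card = i - B.card := by omega
    rw [this]
    push_cast [Nat.cast_sub hbi]
    ring
  rw [hGOr] at h3
  rw [hCE, hTO]
  -- goal : α * ι * ((t + 2*c + TB)/2) ≤ π*(π-1)*(c+e)
  have k4 : ι * (α * TB) ≤ ι * (2*(β - 1) * c) := mul_le_mul_of_nonneg_left h4 hι0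
  rcases eq_or_lt_of_le hα1 with hcase | hcase
  · -- α = 1 : A is a singleton, t = 0
    have hA1 : A.card = 1 := by
      have : α = 1 := hcase.symm
      rw [hα] at this; exact_mod_cast this
    obtain ⟨v, hv⟩ := Finset.card_eq_one.mp hA1
    have ht00 : t = 0 := by rw [ht, hv]; simp [hrefl]
    have hβπ : β = π - 1 := by rw [← hαβ, ← hcase]; ring
    have hιβ : ι ≤ π - 1 := by linarith
    -- goal: 1*ι*((0+2c+TB)/2) ≤ π(π-1)(c+e)
    rw [ht00, ← hcase]
    have hπ0 : (0:ℝ) ≤ π := by rw [hπ]; positivity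
    have heπ : 0 ≤ π * (π-1) * e := mul_nonneg (mul_nonneg hπ0 (by linarith)) he0
    rw [hβπ, ← hcase] at k4
    have hprod : 0 ≤ (π - ι) * (π - 1) * c :=
      mul_nonneg (mul_nonneg (by linarith) (by linarith)) hc0
    nlinarith [k4, heπ, hprod, hc0, mul_nonneg hι0 hc0]
  · -- α ≥ 2
    have hα1' : 0 < α - 1 := by linarith
    have k1 : (π-1)*(π-ι) * (β * t) ≤ (π-1)*(π-ι) * (2*(α - 1) * c) :=
      mul_le_mul_of_nonneg_left h2 (by nlinarith)
    have k2 : π*(π-1) * ((ι-β) * t) ≤ π*(π-1) * (2*(α - 1) * e) := by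
      apply mul_le_mul_of_nonneg_left h3
      have : (0:ℝ) ≤ π := by rw [hπ]; positivity
      nlinarith
    have k3 : 0 ≤ β * (α * ι * t) := by positivity
    have hid2 : (π-1)*(π-ι) * (β * t) + π*(π-1) * ((ι-β) * t) = (π-1)*(α * ι * t) := by
      rw [← hαβ]; ring
    have hX : (α - 1) * (α * ι * t) ≤
        (α - 1) * (2*((π-1)*(π-ι)*c + π*(π-1)*e)) := by nlinarith [k1, k2, k3, hid2]
    have hcancel : α * ι * t ≤ 2*((π-1)*(π-ι)*c + π*(π-1)*e) :=
      le_of_mul_le_mul_left (by linarith) hα1'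
    have hid3 : α * ι * c + β * ι * c = π * ι * c := by rw [← hαβ]; ring
    nlinarith [hcancel, k4, hid3, hc0, mul_nonneg hι0 hc0]

end AuxLemmas

/-- The greedy algorithm (choosing at each step an element maximizing
`(1/2)·(marginal gain of f) + λ·(marginal distance gain)`) is a 2-approximation for
max-sum diversification with a normalized, non-negative, monotone submodular quality
function subject to a cardinality constraint. -/
theorem stmt_1 {U : Type*} [Fintype U] [DecidableEq U] (d : U → U → ℝ)
    (hsymm : ∀ u v, d u v = d v u)
    (hnonneg : ∀ u v, 0 ≤ d u v)
    (hrefl : ∀ u, d u u = 0)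
    (htri : ∀ u v w, d u w ≤ d u v + d v w)
    (f : Finset U → ℝ)
    (hf0 : f ∅ = 0)
    (hfnonneg : ∀ S, 0 ≤ f S)
    (hfmono : ∀ S T : Finset U, S ⊆ T → f S ≤ f T)
    (hfsub : ∀ (S T : Finset U) (u : U), S ⊆ T →
      f (insert u T) - f T ≤ f (insert u S) - f S)
    (lam : ℝ) (hlam : 0 ≤ lam)
    (p : ℕ) (hp : 1 ≤ p) (hUp : p ≤ Fintype.card U)
    (G : ℕ → Finset U) (u : ℕ → U)
    (hG0 : G 0 = ∅)
    (hstep : ∀ i < p, u i ∉ G i ∧ G (i + 1) = insert (u i) (G i) ∧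
      ∀ v ∉ G i,
        (1 / 2) * (f (insert v (G i)) - f (G i)) + lam * ∑ x ∈ G i, d v x ≤
        (1 / 2) * (f (insert (u i) (G i)) - f (G i)) + lam * ∑ x ∈ G i, d (u i) x)
    (O : Finset U) (hO : O.card = p) :
    f (G p) + lam * dispSet d (G p) ≥ (1 / 2) * (f O + lam * dispSet d O) := by
  classical
  -- cardinality of greedy sets
  have hcard : ∀ i, i ≤ p → (G i).card = i := by
    intro i hi
    induction i with
    | zero => rw [hG0]; simp
    | succ n ih =>
      obtain ⟨hnm, hins, _⟩ := hstep n (by omega)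
      rw [hins, Finset.card_insert_of_notMem hnm, ih (by omega)]
  -- chain of greedy sets
  have hchain : ∀ i j, i ≤ j → j ≤ p → G i ⊆ G j := by
    intro i j hij hjp
    induction j with
    | zero =>
      have : i = 0 := by omega
      rw [this]
    | succ n ih =>
      rcases Nat.eq_or_lt_of_le hij with h | h
      · rw [h]
      · obtain ⟨_, hins, _⟩ := hstep n (by omega)
        rw [hins]
        exact (ih (by omega) (by omega)).trans (Finset.subset_insert _ _)
  -- dispSet basics
  have hdisp0 : dispSet d (∅ : Finset U) = 0 := by simp [dispSet]
  have hdispO0 : 0 ≤ dispSet d O := by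
    have : 0 ≤ ∑ x ∈ O, ∑ y ∈ O, d x y :=
      Finset.sum_nonneg fun x _ => Finset.sum_nonneg fun y _ => hnonneg x y
    simp only [dispSet]; linarith
  have hdispins : ∀ (S : Finset U) (w : U), w ∉ S →
      dispSet d (insert w S) = dispSet d S + ∑ x ∈ S, d w x := by
    intro S w hw
    simp only [dispSet]
    rw [Finset.sum_insert hw]
    have e1 : ∀ x : U, ∑ y ∈ insert w S, d x y = d x w + ∑ y ∈ S, d x y :=
      fun x => Finset.sum_insert hw
    rw [e1 w, hrefl w, Finset.sum_congr (rfl : S = S) (fun x _ => e1 x),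
      Finset.sum_add_distrib]
    have e2 : ∑ x ∈ S, d x w = ∑ x ∈ S, d w x :=
      Finset.sum_congr rfl fun x _ => hsymm x w
    rw [e2]
    ring
  -- the greedy gain
  set g : ℕ → ℝ := fun i =>
    (1 / 2) * (f (insert (u i) (G i)) - f (G i)) + lam * ∑ x ∈ G i, d (u i) x with hg
  -- telescoping
  have htel : ∀ k, k ≤ p →
      (1/2) * f (G k) + lam * dispSet d (G k) = ∑ i ∈ Finset.range k, g i := by
    intro k hk
    induction k with
    | zero => rw [hG0]; simp [hf0, hdisp0]
    | succ n ih =>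
      obtain ⟨hnm, hins, _⟩ := hstep n (by omega)
      rw [Finset.sum_range_succ, ← ih (by omega), hins, hdispins _ _ hnm, hg]
      ring
  set M := max (f O - f (G p)) 0 with hM
  have hM0 : 0 ≤ M := le_max_right _ _
  have hMf : f O - f (G p) ≤ M := le_max_left _ _
  have hp0 : (0:ℝ) < (p:ℝ) := by exact_mod_cast hp
  -- per-step bound
  have hstepbound : ∀ i ∈ Finset.range p,
      (1/(2*(p:ℝ)))*M + lam * ((i:ℝ) * dispSet d O / ((p:ℝ)*((p:ℝ)-1))) ≤ g i := by
    intro i hi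
    rw [Finset.mem_range] at hi
    set A := O \ G i with hA
    have hGc : (G i).card = i := hcard i (le_of_lt hi)
    have haup : A.card ≤ p := by rw [← hO]; exact Finset.card_le_card Finset.sdiff_subset
    have halow : 1 ≤ A.card := by
      have h1 := Finset.le_card_sdiff (G i) O
      rw [hO, hGc] at h1
      rw [hA]
      omega
    obtain ⟨hnm, hins, hmax⟩ := hstep i hi
    set C := ∑ v ∈ A, ∑ x ∈ G i, d v x with hC
    have hC0 : 0 ≤ C :=
      Finset.sum_nonneg fun x _ => Finset.sum_nonneg fun y _ => hnonneg x y
    have hsum1 : ∑ v ∈ A, ((1/2)*(f (insert v (G i)) - f (G i)) + lam * ∑ x ∈ G i, d v x)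
        ≤ (A.card : ℝ) * g i := by
      have h1 : ∑ v ∈ A, ((1/2)*(f (insert v (G i)) - f (G i)) + lam * ∑ x ∈ G i, d v x)
          ≤ ∑ _v ∈ A, ((1/2)*(f (insert (u i) (G i)) - f (G i)) +
              lam * ∑ x ∈ G i, d (u i) x) := by
        apply Finset.sum_le_sum
        intro v hv
        exact hmax v (Finset.mem_sdiff.mp hv).2
      rw [Finset.sum_const, nsmul_eq_mul] at h1
      exact h1
    have hsum2 : ∑ v ∈ A, ((1/2)*(f (insert v (G i)) - f (G i)) + lam * ∑ x ∈ G i, d v x)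
        = (1/2) * (∑ v ∈ A, (f (insert v (G i)) - f (G i))) + lam * C := by
      rw [Finset.sum_add_distrib, ← Finset.mul_sum, ← Finset.mul_sum]
    have hfAbound : M ≤ ∑ v ∈ A, (f (insert v (G i)) - f (G i)) := by
      apply max_le
      · have hms := marg_sum f hfsub (G i) A
        have hOsub : O ⊆ G i ∪ A := by
          intro x hx
          by_cases h : x ∈ G i
          · exact Finset.mem_union_left _ h
          · exact Finset.mem_union_right _ (Finset.mem_sdiff.mpr ⟨hx, h⟩)
        have hm1 := hfmono O (G i ∪ A) hOsub
        have hm2 := hfmono (G i) (G p) (hchain i p (le_of_lt hi) le_rfl)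
        linarith
      · exact Finset.sum_nonneg fun v hv => by
          have := hfmono (G i) (insert v (G i)) (Finset.subset_insert _ _); linarith
    have hCk := main_claim d hsymm hnonneg hrefl htri O (G i) p i hO hGc hi
    have hkey : (1/2)*M + lam * C ≤ (A.card:ℝ) * g i := by
      have := mul_le_mul_of_nonneg_left hfAbound (by norm_num : (0:ℝ) ≤ 1/2)
      linarith
    set a := (A.card : ℝ) with ha
    have ha0 : (0:ℝ) < a := by rw [ha]; exact_mod_cast halow
    have hap : a ≤ (p:ℝ) := by rw [ha]; exact_mod_cast haup
    have t1 : a * ((1/(2*(p:ℝ)))*M) ≤ (1/2)*M := by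
      have h1 : a * M ≤ (p:ℝ) * M := mul_le_mul_of_nonneg_right hap hM0
      have h2 : (0:ℝ) < 1/(2*(p:ℝ)) := by positivity
      have h3 := mul_le_mul_of_nonneg_right h1 (le_of_lt h2)
      have h4 : (p:ℝ) * M * (1/(2*(p:ℝ))) = (1/2)*M := by field_simp
      calc a * ((1/(2*(p:ℝ)))*M) = a * M * (1/(2*(p:ℝ))) := by ring
        _ ≤ (p:ℝ) * M * (1/(2*(p:ℝ))) := h3
        _ = (1/2)*M := h4
    have t2 : a * (lam * ((i:ℝ) * dispSet d O / ((p:ℝ)*((p:ℝ)-1)))) ≤ lam * C := by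
      rcases Nat.lt_or_ge p 2 with hp2 | hp2
      · -- p = 1, hence i = 0
        have hi0 : i = 0 := by omega
        rw [hi0]
        simp
        positivity
      · have hden : (0:ℝ) < (p:ℝ)*((p:ℝ)-1) := by
          have h1 : (2:ℝ) ≤ (p:ℝ) := by exact_mod_cast hp2
          nlinarith
        have hstep1 : a * (i:ℝ) * dispSet d O ≤ ((p:ℝ)*((p:ℝ)-1)) * C := by
          have : dispSet d O = (∑ x ∈ O, ∑ y ∈ O, d x y) / 2 := rfl
          rw [this]; exact hCk
        have hstep2 : a * ((i:ℝ) * dispSet d O / ((p:ℝ)*((p:ℝ)-1))) ≤ C := by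
          rw [mul_div_assoc'] at *
          rw [div_le_iff₀ hden]
          calc a * ((i:ℝ) * dispSet d O) = a * (i:ℝ) * dispSet d O := by ring
            _ ≤ ((p:ℝ)*((p:ℝ)-1)) * C := hstep1
            _ = C * ((p:ℝ)*((p:ℝ)-1)) := by ring
        calc a * (lam * ((i:ℝ) * dispSet d O / ((p:ℝ)*((p:ℝ)-1))))
            = lam * (a * ((i:ℝ) * dispSet d O / ((p:ℝ)*((p:ℝ)-1)))) := by ring
          _ ≤ lam * C := mul_le_mul_of_nonneg_left hstep2 hlam
    have hfinal : a * ((1/(2*(p:ℝ)))*M + lam * ((i:ℝ) * dispSet d O / ((p:ℝ)*((p:ℝ)-1))))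
        ≤ a * g i := by
      rw [mul_add]
      calc a * ((1/(2*(p:ℝ)))*M) + a * (lam * ((i:ℝ) * dispSet d O / ((p:ℝ)*((p:ℝ)-1))))
          ≤ (1/2)*M + lam * C := add_le_add t1 t2
        _ ≤ a * g i := hkey
    exact le_of_mul_le_mul_left hfinal ha0
  -- sum up
  have hsumg := Finset.sum_le_sum hstepbound
  have hconst : ∑ _i ∈ Finset.range p, (1/(2*(p:ℝ)))*M = (1/2)*M := by
    rw [Finset.sum_const, Finset.card_range, nsmul_eq_mul]
    field_simp
  have hdistsum : ∑ i ∈ Finset.range p, lam * ((i:ℝ) * dispSet d O / ((p:ℝ)*((p:ℝ)-1)))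
      = lam * (dispSet d O / 2) := by
    rcases Nat.lt_or_ge p 2 with hp2 | hp2
    · -- p = 1 : O is a singleton, dispSet d O = 0
      have hp1 : p = 1 := by omega
      have : dispSet d O = 0 := by
        obtain ⟨v, hv⟩ := Finset.card_eq_one.mp (by rw [hO, hp1])
        rw [hv]; simp [dispSet, hrefl]
      rw [this, hp1]
      simp
    · have hgauss : ∑ i ∈ Finset.range p, (i:ℝ) = (p:ℝ)*((p:ℝ)-1)/2 := by
        have h1 := Finset.sum_range_id_mul_two p
        have h2 : ((∑ i ∈ Finset.range p, i) * 2 : ℕ) = (p * (p-1) : ℕ) := h1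
        have h3 : ((∑ i ∈ Finset.range p, i : ℕ):ℝ) * 2 = (p:ℝ) * ((p:ℝ)-1) := by
          have h4 : ((p * (p-1) : ℕ) : ℝ) = (p:ℝ) * ((p:ℝ)-1) := by
            push_cast [Nat.cast_sub (by omega : 1 ≤ p)]
            ring
          rw [← h4]
          exact_mod_cast congrArg (Nat.cast (R := ℝ)) h2
        push_cast at h3 ⊢
        linarith
      have hden : ((p:ℝ)*((p:ℝ)-1)) ≠ 0 := by
        have h1 : (2:ℝ) ≤ (p:ℝ) := by exact_mod_cast hp2
        nlinarith
      have h0 : ∀ i ∈ Finset.range p,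
          lam * ((i:ℝ) * dispSet d O / ((p:ℝ)*((p:ℝ)-1))) =
            (lam * (dispSet d O / ((p:ℝ)*((p:ℝ)-1)))) * (i:ℝ) := fun i _ => by ring
      rw [Finset.sum_congr rfl h0, ← Finset.mul_sum, hgauss]
      field_simp
      rw [mul_div_assoc, div_self (right_ne_zero_of_mul hden), mul_one]
  rw [Finset.sum_add_distrib, hconst, hdistsum] at hsumg
  have hteleq := htel p le_rfl
  have hfGp := hfnonneg (G p)
  rw [ge_iff_le]
  have : (1/2)*M + lam * (dispSet d O / 2) ≤ (1/2) * f (G p) + lam * dispSet d (G p) := by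
    rw [hteleq]; exact hsumg
  linarith
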